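/- Dominance of the true label's expected belief: let k ≥ 1 and l ≥ 3 be integers and let p_1, p_2, p_3 ∈ (0, 1) be real numbers with p_1 + p_2 + p_3 = 1 and p_1 ≥ p_2 ≥ p_3 > 0. Define E(k, l, p_1, p_2) = Σ_{h=0}^{k−1} Σ_{i=0}^{k−h−1} Σ_{(j_1,…,j_{l−2}) ∈ {0,…,k−h−1}^{l−2}} [ C(k, k−h) · ( C(k−h, i) · ∏_{a=1}^{l−2} C(k−h, j_a) − Σ_{b=1}^{min(i, j_1, …, j_{l−2})} (−1)^{b+1} · C(k−h, b) · C(k−h−b, i−b) · ∏_{c=1}^{l−2} C(k−h−b, j_c−b) ) ] · 2^{−k} · (p_1/(2^{l−2}−1))^{i} · (p_2/2^{l−2})^{k−h−i}, and define F(k, l, p_1, p_3) by the same expression with the summation variable i renamed to t and the final factor (p_2/2^{l−2})^{k−h−i} replaced by (p_3/(2^{l−1}−1))^{k−h−t}. Then E(k, l, p_1, p_2) > F(k, l, p_1, p_3). -/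

import Mathlib

/-- Closed-form expression for the conditional expected belief
`E[bel^{m̂}({ỹ}) | X = x̃]` in the hidden true label `ỹ` of an instance with `k`
neighbors, under the label-noise model of Assumption 1 with weights `p₁, p₂`. -/
noncomputable def expectedBeliefTrue (k l : ℕ) (p₁ p₂ : ℝ) : ℝ :=
  ∑ h ∈ Finset.range k, ∑ i ∈ Finset.range (k - h),
    ∑ j ∈ Fintype.piFinset (fun _ : Fin (l - 2) => Finset.range (k - h)),
      (k.choose (k - h) : ℝ) *
        (((k - h).choose i : ℝ) * (∏ a, ((k - h).choose (j a) : ℝ)) -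
          ∑ b ∈ Finset.Icc 1 (Finset.fold min i j Finset.univ),
            (-1 : ℝ) ^ (b + 1) * ((k - h).choose b : ℝ) *
              ((k - h - b).choose (i - b) : ℝ) *
              ∏ c, ((k - h - b).choose (j c - b) : ℝ)) *
        ((2 : ℝ) ^ k)⁻¹ * (p₁ / ((2 : ℝ) ^ (l - 2) - 1)) ^ i *
        (p₂ / (2 : ℝ) ^ (l - 2)) ^ (k - h - i)

/-- Closed-form expression for the conditional expected belief
`E[bel^{m̂}({ỹ_c}) | X = x̃]` in the class label `ỹ_c` that cooccurs most frequently with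
the true label, under the label-noise model of Assumption 1 with weights `p₁, p₃`: the
same expression as `expectedBeliefTrue` with the summation variable `i` renamed to `t`
and the final factor replaced by `(p₃ / (2^{l−1} − 1))^{k−h−t}`. -/
noncomputable def expectedBeliefCooccur (k l : ℕ) (p₁ p₃ : ℝ) : ℝ :=
  ∑ h ∈ Finset.range k, ∑ t ∈ Finset.range (k - h),
    ∑ j ∈ Fintype.piFinset (fun _ : Fin (l - 2) => Finset.range (k - h)),
      (k.choose (k - h) : ℝ) *
        (((k - h).choose t : ℝ) * (∏ a, ((k - h).choose (j a) : ℝ)) -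
          ∑ b ∈ Finset.Icc 1 (Finset.fold min t j Finset.univ),
            (-1 : ℝ) ^ (b + 1) * ((k - h).choose b : ℝ) *
              ((k - h - b).choose (t - b) : ℝ) *
              ∏ c, ((k - h - b).choose (j c - b) : ℝ)) *
        ((2 : ℝ) ^ k)⁻¹ * (p₁ / ((2 : ℝ) ^ (l - 2) - 1)) ^ t *
        (p₃ / ((2 : ℝ) ^ (l - 1) - 1)) ^ (k - h - t)

section Aux
open Finset

/-- Number of `s'`-subsets of a fintype containing a fixed set `T`. -/
lemma count_supersets {α : Type*} [Fintype α] [DecidableEq α] (T : Finset α) (s' : ℕ) :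
    #((Finset.powersetCard s' (Finset.univ : Finset α)).filter (fun A => T ⊆ A)) =
      if #T ≤ s' then (Fintype.card α - #T).choose (s' - #T) else 0 := by
  split_ifs with h
  · have hcard : #((Finset.univ : Finset α) \ T) = Fintype.card α - #T := by
      rw [card_sdiff_of_subset (subset_univ T), card_univ]
    rw [← hcard, ← Finset.card_powersetCard (s' - #T) ((Finset.univ : Finset α) \ T)]
    apply Finset.card_nbij' (fun A => A \ T) (fun B => B ∪ T)
    · intro A hA
      simp only [Finset.mem_coe, mem_filter, Finset.mem_powersetCard_univ] at hA
      rw [Finset.mem_coe, Finset.mem_powersetCard]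
      exact ⟨sdiff_subset_sdiff (subset_univ A) (le_refl T), by rw [card_sdiff_of_subset hA.2, hA.1]⟩
    · intro B hB
      rw [Finset.mem_coe, Finset.mem_powersetCard] at hB
      have hdisj : Disjoint B T := (Finset.subset_sdiff.mp hB.1).2
      simp only [Finset.mem_coe, mem_filter, Finset.mem_powersetCard_univ]
      constructor
      · rw [card_union_of_disjoint hdisj, hB.2]
        omega
      · exact subset_union_right
    · intro A hA
      simp only [Finset.mem_coe, mem_filter] at hA
      exact sdiff_union_of_subset hA.2
    · intro B hB
      rw [Finset.mem_coe, Finset.mem_powersetCard] at hB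
      have hdisj : Disjoint B T := (Finset.subset_sdiff.mp hB.1).2
      exact union_sdiff_cancel_right hdisj
  · rw [Finset.card_eq_zero, Finset.filter_eq_empty_iff]
    intro A hA
    rw [Finset.mem_powersetCard_univ] at hA
    intro hTA
    exact h (hA ▸ card_le_card hTA)

/-- Inclusion–exclusion: the alternating sum counts tuples of subsets with empty
intersection, hence is nonnegative. -/
lemma alt_sum_nonneg (m n M : ℕ) (s : Fin n → ℕ) (hsm : ∀ a, s a ≤ m)
    (hM1 : ∀ a, M ≤ s a) (hM2 : ∃ a, s a ≤ M) :
    0 ≤ ∑ b ∈ Finset.range (M + 1),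
      (-1 : ℝ) ^ b * (m.choose b : ℝ) * ∏ a, (((m - b).choose (s a - b) : ℝ)) := by
  classical
  set X : Finset (Fin n → Finset (Fin m)) :=
    Fintype.piFinset (fun a => Finset.powersetCard (s a) (Finset.univ : Finset (Fin m))) with hX
  have hMm : M ≤ m := by
    obtain ⟨a, ha⟩ := hM2
    exact le_trans (hM1 a) (hsm a)
  -- Step A: the counting identity
  have key : ∑ b ∈ Finset.range (M + 1),
      (-1 : ℝ) ^ b * (m.choose b : ℝ) * ∏ a, (((m - b).choose (s a - b) : ℝ))
      = ∑ S ∈ X, (if Finset.univ.inf S = ∅ then (1 : ℝ) else 0) := by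
    -- RHS rewritten via alternating sums over powersets
    have step1 : ∀ S : Fin n → Finset (Fin m),
        (if Finset.univ.inf S = ∅ then (1 : ℝ) else 0)
          = ∑ T ∈ (Finset.univ.inf S).powerset, (-1 : ℝ) ^ #T := by
      intro S
      have := Finset.sum_powerset_neg_one_pow_card (x := Finset.univ.inf S)
      have := congrArg (fun z : ℤ => (z : ℝ)) this
      push_cast at this
      rw [this]
    have step2 : ∀ S : Fin n → Finset (Fin m),
        (Finset.univ.inf S).powerset
          = (Finset.univ : Finset (Fin m)).powerset.filter (fun T => T ⊆ Finset.univ.inf S) := by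
      intro S
      ext T
      simp [Finset.mem_powerset]
    calc ∑ b ∈ Finset.range (M + 1),
          (-1 : ℝ) ^ b * (m.choose b : ℝ) * ∏ a, (((m - b).choose (s a - b) : ℝ))
        = ∑ T ∈ (Finset.univ : Finset (Fin m)).powerset,
            (-1 : ℝ) ^ #T * (#(X.filter (fun S => T ⊆ Finset.univ.inf S)) : ℝ) := by
          -- evaluate the T-sum by grouping by cardinality
          have hNT : ∀ T : Finset (Fin m),
              (#(X.filter (fun S => T ⊆ Finset.univ.inf S)) : ℝ)
                = ∏ a, (if #T ≤ s a then ((m - #T).choose (s a - #T) : ℝ) else 0) := by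
            intro T
            have hfil : X.filter (fun S => T ⊆ Finset.univ.inf S)
                = Fintype.piFinset (fun a =>
                    (Finset.powersetCard (s a) (Finset.univ : Finset (Fin m))).filter
                      (fun A => T ⊆ A)) := by
              ext S
              simp only [Finset.mem_filter, Fintype.mem_piFinset, hX]
              constructor
              · rintro ⟨h1, h2⟩ a
                exact ⟨h1 a, h2.trans (Finset.inf_le (Finset.mem_univ a))⟩
              · intro h
                exact ⟨fun a => (h a).1, Finset.le_inf (fun a _ => (h a).2)⟩
            rw [hfil, Fintype.card_piFinset]
            push_cast
            refine Finset.prod_congr rfl fun a _ => ?_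
            rw [count_supersets T (s a)]
            simp only [Fintype.card_fin]
            split_ifs <;> simp
          have grouped := Finset.sum_powerset_apply_card
            (f := fun b => (-1 : ℝ) ^ b *
              ∏ a, (if b ≤ s a then ((m - b).choose (s a - b) : ℝ) else 0))
            (x := (Finset.univ : Finset (Fin m)))
          simp only [Finset.card_univ, Fintype.card_fin] at grouped
          refine Eq.trans ?_ (Finset.sum_congr rfl fun T _ => by rw [hNT T]).symm
          refine Eq.trans ?_ grouped.symm
          refine Eq.trans (Finset.sum_congr rfl fun b hb => ?_)
            (Finset.sum_subset (Finset.range_subset_range.mpr (by omega : M + 1 ≤ m + 1)) ?_)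
          · rw [Finset.mem_range] at hb
            have hb' : ∀ a, b ≤ s a := fun a => le_trans (by omega) (hM1 a)
            rw [nsmul_eq_mul, Finset.prod_congr rfl (fun a _ => if_pos (hb' a))]
            ring
          · intro b hb hnb
            rw [Finset.mem_range] at hb
            rw [Finset.mem_range, not_lt] at hnb
            obtain ⟨a, ha⟩ := hM2
            have hba : ¬ b ≤ s a := by omega
            rw [nsmul_eq_mul, Finset.prod_eq_zero (Finset.mem_univ a)
              (show (if b ≤ s a then (((m - b).choose (s a - b) : ℕ) : ℝ) else 0) = 0
                from if_neg hba)]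
            ring
      _ = ∑ T ∈ (Finset.univ : Finset (Fin m)).powerset,
            ∑ S ∈ X, (if T ⊆ Finset.univ.inf S then (-1 : ℝ) ^ #T else 0) := by
          refine Finset.sum_congr rfl fun T _ => ?_
          rw [← Finset.sum_filter, Finset.sum_const, nsmul_eq_mul]
          ring
      _ = ∑ S ∈ X, ∑ T ∈ (Finset.univ : Finset (Fin m)).powerset,
            (if T ⊆ Finset.univ.inf S then (-1 : ℝ) ^ #T else 0) := Finset.sum_comm
      _ = ∑ S ∈ X, (if Finset.univ.inf S = ∅ then (1 : ℝ) else 0) := by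
          refine Finset.sum_congr rfl fun S _ => ?_
          rw [step1 S, step2 S, Finset.sum_filter]
  rw [key]
  apply Finset.sum_nonneg
  intro S _
  split_ifs <;> norm_num

/-- The inclusion–exclusion bracket appearing in the expected-belief formulas
is nonnegative. -/
lemma bracket_nonneg (m n i : ℕ) (j : Fin n → ℕ) (hi : i ≤ m) (hj : ∀ a, j a ≤ m) :
    0 ≤ (m.choose i : ℝ) * (∏ a, (m.choose (j a) : ℝ)) -
      ∑ b ∈ Finset.Icc 1 (Finset.fold min i j Finset.univ),
        (-1 : ℝ) ^ (b + 1) * (m.choose b : ℝ) * ((m - b).choose (i - b) : ℝ) *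
          ∏ c, ((m - b).choose (j c - b) : ℝ) := by
  classical
  set M := Finset.fold min i j Finset.univ with hM
  have hMi : M ≤ i := (Finset.fold_min_le _).mpr (Or.inl le_rfl)
  have hMj : ∀ a, M ≤ j a := fun a => (Finset.fold_min_le _).mpr (Or.inr ⟨a, Finset.mem_univ a, le_rfl⟩)
  set s : Fin (n + 1) → ℕ := Fin.cons i j with hs
  have key := alt_sum_nonneg m (n + 1) M s
    (fun a => by
      refine Fin.cases ?_ ?_ a <;> simp [hs, hi, hj])
    (fun a => by
      refine Fin.cases ?_ ?_ a <;> simp [hs, hMi, hMj])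
    (by
      by_contra hcon
      push_neg at hcon
      have h0 : M + 1 ≤ i := by have := hcon 0; simp [hs] at this; omega
      have hsucc : ∀ a : Fin n, M + 1 ≤ j a := fun a => by
        have := hcon a.succ; simp [hs] at this; omega
      have : M + 1 ≤ M := (Finset.le_fold_min _).mpr ⟨h0, fun a _ => hsucc a⟩
      omega)
  -- rewrite the alternating sum as the bracket
  have expand : ∑ b ∈ Finset.range (M + 1),
      (-1 : ℝ) ^ b * (m.choose b : ℝ) * ∏ a, (((m - b).choose (s a - b) : ℝ))
      = (m.choose i : ℝ) * (∏ a, (m.choose (j a) : ℝ)) -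
        ∑ b ∈ Finset.Icc 1 M,
          (-1 : ℝ) ^ (b + 1) * (m.choose b : ℝ) * ((m - b).choose (i - b) : ℝ) *
            ∏ c, ((m - b).choose (j c - b) : ℝ) := by
    have hprod : ∀ b : ℕ, ∏ a, (((m - b).choose (s a - b) : ℝ))
        = ((m - b).choose (i - b) : ℝ) * ∏ c, ((m - b).choose (j c - b) : ℝ) := by
      intro b
      rw [Fin.prod_univ_succ]
      simp [hs]
    have hins : Finset.range (M + 1) = insert 0 (Finset.Icc 1 M) := by
      ext x
      simp [Finset.mem_range, Finset.mem_Icc, Finset.mem_insert]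
      omega
    rw [hins, Finset.sum_insert (by simp)]
    rw [hprod 0]
    simp only [pow_zero, Nat.choose_zero_right, Nat.cast_one, one_mul, Nat.sub_zero]
    rw [Finset.sum_congr rfl (fun b _ => by rw [hprod b])]
    rw [sub_eq_add_neg, ← Finset.sum_neg_distrib]
    congr 1
    refine Finset.sum_congr rfl fun b _ => ?_
    rw [pow_succ]
    ring
  rw [expand] at key
  exact key

end Aux

/-- Dominance of the true label's expected belief: for `k ≥ 1`, `l ≥ 3`, and
`p₁, p₂, p₃ ∈ (0, 1)` with `p₁ + p₂ + p₃ = 1` and `p₁ ≥ p₂ ≥ p₃ > 0`, we have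
`E(k, l, p₁, p₂) > F(k, l, p₁, p₃)`. -/
theorem expectedBeliefTrue_gt_cooccur (k l : ℕ) (p₁ p₂ p₃ : ℝ)
    (hk : 1 ≤ k) (hl : 3 ≤ l)
    (hp₁ : p₁ ∈ Set.Ioo (0 : ℝ) 1) (hp₂ : p₂ ∈ Set.Ioo (0 : ℝ) 1)
    (hp₃ : p₃ ∈ Set.Ioo (0 : ℝ) 1)
    (hsum : p₁ + p₂ + p₃ = 1)
    (h12 : p₂ ≤ p₁) (h23 : p₃ ≤ p₂) (h3 : 0 < p₃) :
    expectedBeliefCooccur k l p₁ p₃ < expectedBeliefTrue k l p₁ p₂ := by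
  have hden2 : (2 : ℝ) ≤ (2 : ℝ) ^ (l - 2) := by
    calc (2 : ℝ) = 2 ^ 1 := (pow_one 2).symm
    _ ≤ 2 ^ (l - 2) := pow_le_pow_right₀ (by norm_num) (by omega)
  have hden2pos : (0 : ℝ) < (2 : ℝ) ^ (l - 2) := by positivity
  have hden3 : (2 : ℝ) ^ (l - 2) < (2 : ℝ) ^ (l - 1) - 1 := by
    have h2 : (2 : ℝ) ^ (l - 1) = 2 ^ (l - 2) * 2 := by
      rw [← pow_succ]
      congr 1
      omega
    linarith
  have hy3pos : (0 : ℝ) < p₃ / ((2 : ℝ) ^ (l - 1) - 1) := div_pos h3 (by linarith)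
  have hyy : p₃ / ((2 : ℝ) ^ (l - 1) - 1) < p₂ / (2 : ℝ) ^ (l - 2) := by
    calc p₃ / ((2 : ℝ) ^ (l - 1) - 1) < p₃ / (2 : ℝ) ^ (l - 2) :=
          div_lt_div_of_pos_left h3 hden2pos hden3
    _ ≤ p₂ / (2 : ℝ) ^ (l - 2) := by
          exact div_le_div_of_nonneg_right h23 hden2pos.le -- wrong? fix below
  have hxnn : (0 : ℝ) ≤ p₁ / ((2 : ℝ) ^ (l - 2) - 1) := by
    have h1 : (0 : ℝ) < p₁ := hp₁.1
    have h2 : (0 : ℝ) < (2 : ℝ) ^ (l - 2) - 1 := by linarith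
    positivity
  -- pointwise comparison of the summands
  have hterm : ∀ h ∈ Finset.range k, ∀ i ∈ Finset.range (k - h),
      ∀ j ∈ Fintype.piFinset (fun _ : Fin (l - 2) => Finset.range (k - h)),
      (k.choose (k - h) : ℝ) *
        (((k - h).choose i : ℝ) * (∏ a, ((k - h).choose (j a) : ℝ)) -
          ∑ b ∈ Finset.Icc 1 (Finset.fold min i j Finset.univ),
            (-1 : ℝ) ^ (b + 1) * ((k - h).choose b : ℝ) *
              ((k - h - b).choose (i - b) : ℝ) *
              ∏ c, ((k - h - b).choose (j c - b) : ℝ)) *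
        ((2 : ℝ) ^ k)⁻¹ * (p₁ / ((2 : ℝ) ^ (l - 2) - 1)) ^ i *
        (p₃ / ((2 : ℝ) ^ (l - 1) - 1)) ^ (k - h - i) ≤
      (k.choose (k - h) : ℝ) *
        (((k - h).choose i : ℝ) * (∏ a, ((k - h).choose (j a) : ℝ)) -
          ∑ b ∈ Finset.Icc 1 (Finset.fold min i j Finset.univ),
            (-1 : ℝ) ^ (b + 1) * ((k - h).choose b : ℝ) *
              ((k - h - b).choose (i - b) : ℝ) *
              ∏ c, ((k - h - b).choose (j c - b) : ℝ)) *
        ((2 : ℝ) ^ k)⁻¹ * (p₁ / ((2 : ℝ) ^ (l - 2) - 1)) ^ i *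
        (p₂ / (2 : ℝ) ^ (l - 2)) ^ (k - h - i) := by
    intro h hh i hi j hj
    have hB : 0 ≤ ((k - h).choose i : ℝ) * (∏ a, ((k - h).choose (j a) : ℝ)) -
        ∑ b ∈ Finset.Icc 1 (Finset.fold min i j Finset.univ),
          (-1 : ℝ) ^ (b + 1) * ((k - h).choose b : ℝ) *
            ((k - h - b).choose (i - b) : ℝ) *
            ∏ c, ((k - h - b).choose (j c - b) : ℝ) :=
      bracket_nonneg (k - h) (l - 2) i j
        (le_of_lt (Finset.mem_range.mp hi))
        (fun a => le_of_lt (Finset.mem_range.mp ((Fintype.mem_piFinset.mp hj) a)))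
    apply mul_le_mul_of_nonneg_left
      (pow_le_pow_left₀ hy3pos.le hyy.le _)
    have hC : (0 : ℝ) ≤ (k.choose (k - h) : ℝ) := Nat.cast_nonneg _
    exact mul_nonneg (mul_nonneg (mul_nonneg hC hB) (by positivity)) (pow_nonneg hxnn i)
  unfold expectedBeliefCooccur expectedBeliefTrue
  refine Finset.sum_lt_sum
    (fun h hh => Finset.sum_le_sum fun i hi => Finset.sum_le_sum fun j hj => hterm h hh i hi j hj)
    ⟨k - 1, Finset.mem_range.mpr (by omega), ?_⟩
  rw [show k - (k - 1) = 1 from by omega]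
  rw [Finset.sum_range_one, Finset.sum_range_one]
  have hsing : Fintype.piFinset (fun _ : Fin (l - 2) => Finset.range 1)
      = {fun _ => 0} := by
    ext j
    simp [Fintype.mem_piFinset, Nat.lt_one_iff, funext_iff]
  rw [hsing, Finset.sum_singleton, Finset.sum_singleton]
  have hfold : Finset.fold min 0 (fun _ : Fin (l - 2) => (0 : ℕ)) Finset.univ = 0 :=
    Nat.le_zero.mp ((Finset.fold_min_le _).mpr (Or.inl le_rfl))
  simp only [hfold, Finset.Icc_eq_empty_of_lt (by norm_num : (0:ℕ) < 1),
    Finset.sum_empty, Nat.choose_zero_right, Nat.cast_one, one_mul, Finset.prod_const_one,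
    sub_zero, Nat.choose_one_right, pow_zero, mul_one, Nat.sub_zero]
  have hkpos : (0 : ℝ) < (k : ℝ) := by exact_mod_cast hk
  rw [pow_one, pow_one]
  exact mul_lt_mul_of_pos_left hyy (by positivity)
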